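/- The density of square-free numbers exists and equals 6/π²: as N → ∞, (1/N)·#{n : 1 ≤ n ≤ N, n is square-free} tends to 6/π². -/

import Mathlib

open Filter

section aux
open ArithmeticFunction Finset
open scoped ArithmeticFunction.Moebius ArithmeticFunction.zeta

lemma hasSum_moebius_div_sq :
    HasSum (fun d : ℕ => ((μ d : ℝ) / (d : ℝ) ^ 2)) (6 / Real.pi ^ 2) := by
  have hpi : Real.pi ≠ 0 := Real.pi_ne_zero
  have hs : (1 : ℝ) < (2 : ℂ).re := by norm_num
  have hsum : LSeriesSummable (fun n => (μ n : ℂ)) 2 :=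
    ArithmeticFunction.LSeriesSummable_moebius_iff.mpr hs
  have hzeta : LSeries (fun n => ((ζ n : ℕ) : ℂ)) 2 *
      LSeries (fun n => (μ n : ℂ)) 2 = 1 := LSeries_zeta_mul_Lseries_moebius hs
  have hz : LSeries (fun n => ((ζ n : ℕ) : ℂ)) 2 = (Real.pi : ℂ) ^ 2 / 6 := by
    rw [LSeries_zeta_eq_riemannZeta hs, riemannZeta_two]
  have hL : LSeries (fun n => (μ n : ℂ)) 2 = 6 / (Real.pi : ℂ) ^ 2 := by
    rw [hz] at hzeta
    have hp2 : (Real.pi : ℂ) ^ 2 ≠ 0 := by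
      simpa using Complex.ofReal_ne_zero.mpr hpi
    field_simp at hzeta
    rw [eq_div_iff hp2]
    linear_combination hzeta
  have hH : HasSum (fun n : ℕ => LSeries.term (fun n => (μ n : ℂ)) 2 n)
      ((6 : ℂ) / (Real.pi : ℂ) ^ 2) := by
    rw [← hL]; exact hsum.hasSum
  have heq : ∀ n : ℕ, LSeries.term (fun n => (μ n : ℂ)) 2 n
      = ((( μ n : ℝ) / (n : ℝ) ^ 2 : ℝ) : ℂ) := by
    intro n
    rcases eq_or_ne n 0 with rfl | hn
    · simp [LSeries.term]
    · rw [LSeries.term_of_ne_zero hn,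
        show ((2 : ℂ)) = ((2 : ℕ) : ℂ) by norm_num, Complex.cpow_natCast]
      push_cast
      try ring
  rw [funext heq] at hH
  have : ((6 : ℂ) / (Real.pi : ℂ) ^ 2) = ((6 / Real.pi ^ 2 : ℝ) : ℂ) := by push_cast; ring
  rw [this] at hH
  exact_mod_cast Complex.hasSum_ofReal.mp hH

lemma sum_moebius_divisors (b : ℕ) :
    ∑ d ∈ b.divisors, μ d = if b = 1 then 1 else 0 := by
  have := congrArg (fun f : ArithmeticFunction ℤ => f b) moebius_mul_coe_zeta
  simp only [coe_mul_zeta_apply] at this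
  rw [this, one_apply]

lemma sq_dvd_iff_dvd {n a b d : ℕ} (hd : d ≠ 0) (hb : b ≠ 0) (ha : a ≠ 0)
    (hab : b ^ 2 * a = n) (hsa : Squarefree a) : d ^ 2 ∣ n ↔ d ∣ b := by
  have hn : n ≠ 0 := by rw [← hab]; positivity
  constructor
  · intro h
    rw [← Nat.factorization_le_iff_dvd hd hb]
    intro p
    have h2 := (Nat.factorization_le_iff_dvd (pow_ne_zero 2 hd) hn).mpr h p
    rw [← hab, Nat.factorization_mul (pow_ne_zero 2 hb) ha,
      Nat.factorization_pow, Nat.factorization_pow] at h2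
    have h3 : a.factorization p ≤ 1 := hsa.natFactorization_le_one p
    simp only [Finsupp.coe_add, Finsupp.coe_smul, Pi.add_apply, Pi.smul_apply,
      smul_eq_mul] at h2
    omega
  · intro h
    calc d ^ 2 ∣ b ^ 2 := pow_dvd_pow_of_dvd h 2
    _ ∣ n := hab ▸ Dvd.intro a rfl

lemma squarefree_ite_eq_sum {N n : ℕ} (h1 : 1 ≤ n) (h2 : n ≤ N) :
    (if Squarefree n then (1 : ℤ) else 0)
      = ∑ d ∈ Finset.Icc 1 N, if d ^ 2 ∣ n then μ d else 0 := by
  obtain ⟨a, b, hab, hsa⟩ := Nat.sq_mul_squarefree n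
  have hn : n ≠ 0 := by omega
  have hb : b ≠ 0 := by rintro rfl; simp at hab; omega
  have ha : a ≠ 0 := by rintro rfl; simp at hab; omega
  have hbN : b ≤ N := by
    have : b ≤ b ^ 2 * a := by nlinarith [Nat.one_le_iff_ne_zero.mpr ha, Nat.one_le_iff_ne_zero.mpr hb]
    omega
  have hset : ∀ d ∈ Finset.Icc 1 N, (if d ^ 2 ∣ n then (μ d : ℤ) else 0)
      = if d ∈ b.divisors then μ d else 0 := by
    intro d hd
    rw [Finset.mem_Icc] at hd
    have hd0 : d ≠ 0 := by omega
    have hiff : d ^ 2 ∣ n ↔ d ∈ b.divisors := by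
      rw [sq_dvd_iff_dvd hd0 hb ha hab hsa, Nat.mem_divisors]
      simp [hb]
    simp only [hiff]
  have hsub : b.divisors ⊆ Finset.Icc 1 N := by
    intro d hd
    rw [Nat.mem_divisors] at hd
    rw [Finset.mem_Icc]
    have hd0 : d ≠ 0 := by rintro rfl; exact hb (Nat.eq_zero_of_zero_dvd hd.1)
    exact ⟨Nat.one_le_iff_ne_zero.mpr hd0,
      le_trans (Nat.le_of_dvd (Nat.pos_of_ne_zero hb) hd.1) hbN⟩
  rw [Finset.sum_congr rfl hset, Finset.sum_ite_mem,
    Finset.inter_eq_right.mpr hsub, sum_moebius_divisors]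
  have hsn : Squarefree n ↔ b = 1 := by
    constructor
    · intro hs
      refine Nat.isUnit_iff.mp (hs b ?_)
      rw [← hab]; exact ⟨a, by ring⟩
    · rintro rfl
      rw [← hab]; simpa using hsa
  simp [hsn]

lemma tail_sq_sum_le {K N : ℕ} (hK : 1 ≤ K) (hKN : K ≤ N) :
    ∑ d ∈ Finset.Ioc K N, (1 : ℝ) / (d : ℝ) ^ 2 ≤ 1 / K - 1 / N := by
  induction N, hKN using Nat.le_induction with
  | base => simp
  | succ N hKN ih =>
    rw [Finset.sum_Ioc_succ_top hKN]
    have hN : (1 : ℝ) ≤ (N : ℝ) := by exact_mod_cast hK.trans hKN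
    have hN0 : (0 : ℝ) < N := by linarith
    have hN1 : (0 : ℝ) < (N : ℝ) + 1 := by linarith
    have key : (1 : ℝ) / ((N : ℝ) + 1) ^ 2 ≤ 1 / N - 1 / (N + 1) := by
      rw [div_sub_div _ _ (ne_of_gt hN0) (ne_of_gt hN1)]
      rw [div_le_div_iff₀ (by positivity) (by positivity)]
      nlinarith
    push_cast
    linarith

lemma card_squarefree_eq (N : ℕ) :
    (((Finset.Icc 1 N).filter (fun n : ℕ => Squarefree n)).card : ℤ)
      = ∑ d ∈ Finset.Icc 1 N, μ d * ((N / d ^ 2 : ℕ) : ℤ) := by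
  have h0 : (((Finset.Icc 1 N).filter (fun n : ℕ => Squarefree n)).card : ℤ)
      = ∑ n ∈ Finset.Icc 1 N, if Squarefree n then (1 : ℤ) else 0 := by
    rw [Finset.card_filter]; push_cast; rfl
  rw [h0]
  have h1 : (∑ n ∈ Finset.Icc 1 N, if Squarefree n then (1 : ℤ) else 0)
      = ∑ n ∈ Finset.Icc 1 N, ∑ d ∈ Finset.Icc 1 N, if d ^ 2 ∣ n then (μ d : ℤ) else 0 :=
    Finset.sum_congr rfl fun n hn => by
      rw [Finset.mem_Icc] at hn
      exact squarefree_ite_eq_sum hn.1 hn.2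
  rw [h1, Finset.sum_comm]
  refine Finset.sum_congr rfl fun d hd => ?_
  rw [← Finset.sum_filter, Finset.sum_const, nsmul_eq_mul, mul_comm]
  congr 1
  rw [show Finset.Icc 1 N = Finset.Ioc 0 N from rfl]
  exact_mod_cast congrArg (Nat.cast : ℕ → ℤ) (Nat.Ioc_filter_dvd_card_eq_div N (d ^ 2))

lemma err_single {N d : ℕ} (hN : 1 ≤ N) (hd : 1 ≤ d) :
    |((N / d ^ 2 : ℕ) : ℝ) / N - 1 / (d : ℝ) ^ 2| ≤ 1 / (N : ℝ) := by
  have hd2 : (0 : ℝ) < (d : ℝ) ^ 2 := by positivity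
  have hN0 : (0 : ℝ) < N := by exact_mod_cast hN
  have hup : ((N / d ^ 2 : ℕ) : ℝ) * (d : ℝ) ^ 2 ≤ N := by
    exact_mod_cast Nat.div_mul_le_self N (d ^ 2)
  have hlo : (N : ℝ) < (((N / d ^ 2 : ℕ) : ℝ) + 1) * (d : ℝ) ^ 2 := by
    have h := (Nat.cast_lt (α := ℝ)).mpr (Nat.lt_mul_div_succ N (b := d ^ 2) (by positivity))
    push_cast at h
    nlinarith [h]
  rw [abs_le]
  constructor
  · rw [div_sub_div _ _ (ne_of_gt hN0) (ne_of_gt hd2)]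
    rw [neg_le, ← neg_div, div_le_div_iff₀ (by positivity) hN0]
    nlinarith
  · rw [div_sub_div _ _ (ne_of_gt hN0) (ne_of_gt hd2), div_le_div_iff₀ (by positivity) hN0]
    nlinarith
lemma err_bound {N : ℕ} (hN : 1 ≤ N) :
    |∑ d ∈ Finset.Icc 1 N, ((μ d : ℝ) * ((N / d ^ 2 : ℕ) : ℝ) / N - (μ d : ℝ) / (d : ℝ) ^ 2)|
      ≤ 2 / (Nat.sqrt N : ℝ) := by
  set K := Nat.sqrt N with hKdef
  have hK1 : 1 ≤ K := Nat.sqrt_pos.mpr hN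
  have hKN : K ≤ N := Nat.sqrt_le_self N
  have hK0 : (0 : ℝ) < K := by exact_mod_cast hK1
  have hN0 : (0 : ℝ) < N := by exact_mod_cast hN
  have habs : ∀ d ∈ Finset.Icc 1 N,
      |(μ d : ℝ) * ((N / d ^ 2 : ℕ) : ℝ) / N - (μ d : ℝ) / (d : ℝ) ^ 2|
        ≤ |((N / d ^ 2 : ℕ) : ℝ) / N - 1 / (d : ℝ) ^ 2| := by
    intro d hd
    have h1 : (μ d : ℝ) * ((N / d ^ 2 : ℕ) : ℝ) / N - (μ d : ℝ) / (d : ℝ) ^ 2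
        = (μ d : ℝ) * (((N / d ^ 2 : ℕ) : ℝ) / N - 1 / (d : ℝ) ^ 2) := by ring
    rw [h1, abs_mul]
    have hm : |(μ d : ℝ)| ≤ 1 := by
      have := abs_moebius_le_one (n := d)
      exact_mod_cast this
    nlinarith [abs_nonneg (((N / d ^ 2 : ℕ) : ℝ) / N - 1 / (d : ℝ) ^ 2)]
  calc |∑ d ∈ Finset.Icc 1 N, ((μ d : ℝ) * ((N / d ^ 2 : ℕ) : ℝ) / N - (μ d : ℝ) / (d : ℝ) ^ 2)|
      ≤ ∑ d ∈ Finset.Icc 1 N, |(μ d : ℝ) * ((N / d ^ 2 : ℕ) : ℝ) / N - (μ d : ℝ) / (d : ℝ) ^ 2| :=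
        Finset.abs_sum_le_sum_abs _ _
    _ ≤ ∑ d ∈ Finset.Icc 1 N, |((N / d ^ 2 : ℕ) : ℝ) / N - 1 / (d : ℝ) ^ 2| :=
        Finset.sum_le_sum habs
    _ = ∑ d ∈ Finset.Ioc 0 K, |((N / d ^ 2 : ℕ) : ℝ) / N - 1 / (d : ℝ) ^ 2|
        + ∑ d ∈ Finset.Ioc K N, |((N / d ^ 2 : ℕ) : ℝ) / N - 1 / (d : ℝ) ^ 2| := by
        rw [show Finset.Icc 1 N = Finset.Ioc 0 N from rfl,
          ← Finset.sum_Ioc_consecutive _ (Nat.zero_le K) hKN]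
    _ ≤ (K : ℝ) * (1 / N) + (1 / K - 1 / N) := by
        gcongr ?_ + ?_
        · calc ∑ d ∈ Finset.Ioc 0 K, |((N / d ^ 2 : ℕ) : ℝ) / N - 1 / (d : ℝ) ^ 2|
              ≤ ∑ _d ∈ Finset.Ioc 0 K, (1 / N : ℝ) := by
                refine Finset.sum_le_sum fun d hd => ?_
                rw [Finset.mem_Ioc] at hd
                exact err_single hN hd.1
            _ = (K : ℝ) * (1 / N) := by simp [mul_comm]
        · calc ∑ d ∈ Finset.Ioc K N, |((N / d ^ 2 : ℕ) : ℝ) / N - 1 / (d : ℝ) ^ 2|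
              = ∑ d ∈ Finset.Ioc K N, (1 / (d : ℝ) ^ 2) := by
                refine Finset.sum_congr rfl fun d hd => ?_
                rw [Finset.mem_Ioc] at hd
                have : N / d ^ 2 = 0 := by
                  apply Nat.div_eq_of_lt
                  have := (Nat.sqrt_lt').mp hd.1
                  nlinarith
                rw [this]
                rw [Nat.cast_zero, zero_div, zero_sub, abs_neg, abs_of_nonneg (by positivity)]
            _ ≤ 1 / (K : ℝ) - 1 / N := tail_sq_sum_le hK1 hKN
    _ ≤ 2 / (K : ℝ) := by
        have hKsq : (K : ℝ) * K ≤ N := by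
          have h := (Nat.cast_le (α := ℝ)).mpr (Nat.sqrt_le' N)
          push_cast at h
          linarith [h]
        have h1 : (K : ℝ) * (1 / N) ≤ 1 / K := by
          rw [mul_one_div, div_le_div_iff₀ hN0 hK0]
          nlinarith
        have h2 : (0:ℝ) < 1 / N := by positivity
        have : (2 : ℝ) / K = 1 / K + 1 / K := by ring
        linarith

end aux

open ArithmeticFunction Finset ArithmeticFunction.Moebius in
/-- The density of square-free numbers exists and equals `6/π²`. -/
theorem density_of_squarefree :
    Tendsto (fun N : ℕ =>
      (((Finset.Icc 1 N).filter (fun n : ℕ => Squarefree n)).card : ℝ) / (N : ℝ))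
      atTop (nhds (6 / Real.pi ^ 2)) := by
  set f : ℕ → ℝ := fun N =>
    (((Finset.Icc 1 N).filter (fun n : ℕ => Squarefree n)).card : ℝ) / (N : ℝ) with hf
  set T : ℕ → ℝ := fun N => ∑ d ∈ Finset.Icc 1 N, (μ d : ℝ) / (d : ℝ) ^ 2 with hT
  have hTtendsto : Tendsto T atTop (nhds (6 / Real.pi ^ 2)) := by
    have h1 := hasSum_moebius_div_sq.tendsto_sum_nat
    have h2 : Tendsto (fun N : ℕ =>
        ∑ d ∈ Finset.range (N + 1), (μ d : ℝ) / (d : ℝ) ^ 2) atTop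
        (nhds (6 / Real.pi ^ 2)) := h1.comp (tendsto_add_atTop_nat 1)
    convert h2 using 2 with N
    refine Finset.sum_subset ?_ ?_
    · intro d hd
      rw [Finset.mem_Icc] at hd
      rw [Finset.mem_range]
      omega
    · intro d hd hnd
      rw [Finset.mem_range] at hd
      rw [Finset.mem_Icc] at hnd
      have : d = 0 := by omega
      simp [this]
  have hdiff : Tendsto (fun N => f N - T N) atTop (nhds 0) := by
    apply squeeze_zero_norm' (a := fun N : ℕ => 2 / (Nat.sqrt N : ℝ))
    · filter_upwards [eventually_ge_atTop 1] with N hN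
      have hfe : f N = ∑ d ∈ Finset.Icc 1 N, (μ d : ℝ) * ((N / d ^ 2 : ℕ) : ℝ) / N := by
        have h := congrArg (Int.cast : ℤ → ℝ) (card_squarefree_eq N)
        push_cast at h
        simp only [hf]
        rw [h, Finset.sum_div]
        refine Finset.sum_congr rfl fun d _ => ?_
        have hq : ((N : ℤ) / (d : ℤ) ^ 2) = ((N / d ^ 2 : ℕ) : ℤ) := by
          push_cast; rfl
        rw [hq, Int.cast_natCast]
      rw [Real.norm_eq_abs, hfe, hT, ← Finset.sum_sub_distrib]
      exact err_bound hN
    · have hsqrt : Tendsto Nat.sqrt atTop atTop := by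
        apply tendsto_atTop_atTop.mpr
        intro b
        exact ⟨b * b, fun a ha => Nat.le_sqrt.mpr ha⟩
      exact (tendsto_const_div_atTop_nhds_zero_nat 2).comp hsqrt
  have := hdiff.add hTtendsto
  rw [zero_add] at this
  convert this using 2 with N
  ring
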